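/- arXiv:1703.06075 — 4 statements merged into one kernel-verified Lean document; each statement's English description precedes it below -/
import Mathlib

section
/- Let m, n, q be positive integers with n odd and q even. Then the series Σ_{k=1}^{∞} ( Π_{j=1}^{m−1} L_{nk+jnq} ) / ( Π_{j=0}^{m} F_{nk+jnq} ) converges, and its sum equals (1 / (2 F_{mnq})) · Σ_{k=1}^{q} (−1)^{k} Π_{j=0}^{m−1} ( L_{nk+jnq} / F_{nk+jnq} ). -/
open Filter Topology

open Real goldenRatio

/-- The Lucas numbers: `L 0 = 2`, `L 1 = 1`, `L (n+2) = L (n+1) + L n`. -/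
def lucas : ℕ → ℕ
  | 0 => 2
  | 1 => 1
  | n + 2 => lucas (n + 1) + lucas n

lemma lucas_binet : ∀ i : ℕ, (lucas i : ℝ) = φ ^ i + ψ ^ i := by
  have step : ∀ x : ℝ, x ^ 2 = x + 1 → ∀ i : ℕ, x ^ (i + 2) = x ^ (i + 1) + x ^ i := by
    intro x hx i
    have : x ^ (i+2) = x ^ i * x ^ 2 := by ring
    rw [this, hx]; ring
  intro i
  induction i using Nat.strong_induction_on with
  | _ i ih =>
    match i with
    | 0 => norm_num [lucas]
    | 1 => simp [lucas, goldenRatio_add_goldenConj]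
    | (j+2) =>
      have h1 := ih (j+1) (by omega)
      have h0 := ih j (by omega)
      show ((lucas (j+1) + lucas j : ℕ) : ℝ) = _
      push_cast
      rw [h1, h0, step φ goldenRatio_sq, step ψ goldenConj_sq]
      ring

lemma key (a d : ℕ) : (lucas a : ℝ) * Nat.fib (a + d) - Nat.fib a * lucas (a + d)
    = 2 * (-1 : ℝ) ^ a * Nat.fib d := by
  have gen : ∀ x y s : ℝ, s ≠ 0 →
      (x ^ a + y ^ a) * ((x ^ (a + d) - y ^ (a + d)) / s)
        - (x ^ a - y ^ a) / s * (x ^ (a + d) + y ^ (a + d))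
        = 2 * (x * y) ^ a * ((x ^ d - y ^ d) / s) := by
    intro x y s hs
    field_simp
    rw [pow_add, pow_add, mul_pow]
    ring
  rw [lucas_binet, lucas_binet, Real.coe_fib_eq, Real.coe_fib_eq, Real.coe_fib_eq]
  have h5 : (√5 : ℝ) ≠ 0 := by positivity
  rw [gen φ ψ _ h5, goldenRatio_mul_goldenConj]

lemma g_tendsto : Tendsto (fun i => (lucas i : ℝ) / (Nat.fib i : ℝ)) atTop (𝓝 (√5)) := by
  have hψ1 : |ψ| < 1 := by
    rw [abs_lt]
    constructor
    · exact neg_one_lt_goldenConj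
    · linarith [goldenConj_neg]
  have hr : |ψ / φ| < 1 := by
    rw [abs_div, abs_of_pos goldenRatio_pos, div_lt_one goldenRatio_pos]
    exact lt_trans hψ1 one_lt_goldenRatio
  have hr0 : Tendsto (fun i : ℕ => (ψ / φ) ^ i) atTop (𝓝 0) :=
    tendsto_pow_atTop_nhds_zero_of_abs_lt_one hr
  have hlim : Tendsto (fun i : ℕ => √5 * (1 + (ψ / φ) ^ i) / (1 - (ψ / φ) ^ i)) atTop
      (𝓝 (√5)) := by
    have h1 : Tendsto (fun i : ℕ => √5 * (1 + (ψ / φ) ^ i)) atTop (𝓝 (√5 * (1 + 0))) :=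
      (tendsto_const_nhds.add hr0).const_mul _
    have h2 : Tendsto (fun i : ℕ => 1 - (ψ / φ) ^ i) atTop (𝓝 (1 - 0)) :=
      tendsto_const_nhds.sub hr0
    have := h1.div h2 (by norm_num)
    simp only [add_zero, sub_zero, mul_one, div_one] at this
    exact this
  refine Tendsto.congr' ?_ hlim
  filter_upwards [eventually_ge_atTop 1] with i hi
  have hF : (0 : ℝ) < (Nat.fib i : ℝ) := by exact_mod_cast Nat.fib_pos.mpr hi
  have h5 : (0:ℝ) < √5 := by positivity
  have hφ : (φ:ℝ) ≠ 0 := goldenRatio_ne_zero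
  have hsub : φ ^ i - ψ ^ i ≠ 0 := by
    have : φ ^ i - ψ ^ i = √5 * (Nat.fib i : ℝ) := by
      rw [Real.coe_fib_eq]; field_simp
    rw [this]; positivity
  have hden : 1 - (ψ / φ) ^ i ≠ 0 := by
    rw [div_pow, sub_ne_zero]
    intro h
    rw [eq_comm, div_eq_one_iff_eq (pow_ne_zero i hφ)] at h
    exact hsub (by rw [h]; ring)
  rw [lucas_binet, Real.coe_fib_eq, div_pow]
  rw [div_pow] at hden
  have e : ∀ x y s : ℝ, s ≠ 0 → x ≠ 0 → x ^ i - y ^ i ≠ 0 → 1 - y ^ i / x ^ i ≠ 0 →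
      (x ^ i + y ^ i) / ((x ^ i - y ^ i) / s) = s * (1 + y ^ i / x ^ i) / (1 - y ^ i / x ^ i) := by
    intro x y s hs hx hxy hd
    field_simp
  exact (e φ ψ (√5) (ne_of_gt h5) hφ hsub hden).symm

lemma fibR_pos {i : ℕ} (hi : 0 < i) : (0 : ℝ) < (Nat.fib i : ℝ) := by
  exact_mod_cast Nat.fib_pos.mpr hi

lemma gsub (a d : ℕ) (ha : 0 < a) (hd : 0 < d) :
    (lucas a : ℝ) / Nat.fib a - (lucas (a + d) : ℝ) / Nat.fib (a + d)
      = 2 * (-1 : ℝ) ^ a * Nat.fib d / ((Nat.fib a : ℝ) * Nat.fib (a + d)) := by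
  have h1 : (Nat.fib a : ℝ) ≠ 0 := ne_of_gt (fibR_pos ha)
  have h2 : (Nat.fib (a + d) : ℝ) ≠ 0 := ne_of_gt (fibR_pos (by omega))
  rw [div_sub_div _ _ h1 h2, key]

lemma term_eq (m n q k : ℕ) (hm : 0 < m) (hn : 0 < n) (hq : 0 < q) (hk : 0 < k)
    (hnodd : Odd n) (hqeven : Even q) :
    (∏ j ∈ Finset.Icc 1 (m - 1), (lucas (n * k + j * n * q) : ℝ)) /
        ∏ j ∈ Finset.range (m + 1), (Nat.fib (n * k + j * n * q) : ℝ)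
      = (1 / (2 * (Nat.fib (m * n * q) : ℝ))) *
        (((-1 : ℝ) ^ k * ∏ j ∈ Finset.range m,
            (lucas (n * k + j * n * q) : ℝ) / (Nat.fib (n * k + j * n * q) : ℝ))
          - ((-1 : ℝ) ^ (k + q) * ∏ j ∈ Finset.range m,
            (lucas (n * (k + q) + j * n * q) : ℝ) / (Nat.fib (n * (k + q) + j * n * q) : ℝ))) := by
  obtain ⟨m', rfl⟩ : ∃ m', m = m' + 1 := ⟨m - 1, by omega⟩
  have harg : ∀ j : ℕ, n * (k + q) + j * n * q = n * k + (j + 1) * n * q := by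
    intro j; ring
  -- abbreviations
  set L : ℕ → ℝ := fun j => (lucas (n * k + j * n * q) : ℝ) with hL
  set F : ℕ → ℝ := fun j => (Nat.fib (n * k + j * n * q) : ℝ) with hF
  have hFpos : ∀ j, 0 < F j := fun j => fibR_pos (by positivity)
  have hFne : ∀ j, F j ≠ 0 := fun j => ne_of_gt (hFpos j)
  -- numerator
  have hnum : (∏ j ∈ Finset.Icc 1 (m' + 1 - 1), (lucas (n * k + j * n * q) : ℝ))
      = ∏ j ∈ Finset.range m', L (j + 1) := by
    rw [Nat.add_sub_cancel, ← Finset.Ico_add_one_right_eq_Icc, Finset.prod_Ico_eq_prod_range]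
    exact Finset.prod_congr (by norm_num) (fun j _ => by rw [hL]; norm_num [Nat.add_comm])
  -- denominator
  have hden : (∏ j ∈ Finset.range (m' + 1 + 1), (Nat.fib (n * k + j * n * q) : ℝ))
      = (∏ j ∈ Finset.range m', F (j + 1)) * F 0 * F (m' + 1) := by
    rw [Finset.prod_range_succ, Finset.prod_range_succ']
  -- G k
  have hGk : (∏ j ∈ Finset.range (m' + 1),
      (lucas (n * k + j * n * q) : ℝ) / (Nat.fib (n * k + j * n * q) : ℝ))
      = (∏ j ∈ Finset.range m', L (j + 1) / F (j + 1)) * (L 0 / F 0) := by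
    rw [Finset.prod_range_succ']
  have hGkq : (∏ j ∈ Finset.range (m' + 1),
      (lucas (n * (k + q) + j * n * q) : ℝ) / (Nat.fib (n * (k + q) + j * n * q) : ℝ))
      = (∏ j ∈ Finset.range m', L (j + 1) / F (j + 1)) * (L (m' + 1) / F (m' + 1)) := by
    rw [Finset.prod_congr rfl (fun j _ => by rw [harg j]), Finset.prod_range_succ]
  rw [hnum, hden, hGk, hGkq]
  have hkq : (-1 : ℝ) ^ (k + q) = (-1 : ℝ) ^ k := by
    rw [pow_add, hqeven.neg_one_pow, mul_one]
  rw [hkq, ← mul_sub, ← mul_sub]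
  -- the difference of the outer terms
  have hdiff : L 0 / F 0 - L (m' + 1) / F (m' + 1)
      = 2 * (-1 : ℝ) ^ k * Nat.fib ((m' + 1) * n * q) / (F 0 * F (m' + 1)) := by
    have := gsub (n * k) ((m' + 1) * n * q) (by positivity) (by positivity)
    have hsgn : (-1 : ℝ) ^ (n * k) = (-1 : ℝ) ^ k := by
      rw [pow_mul, hnodd.neg_one_pow]
    rw [hsgn] at this
    simp only [hL, hF]
    rw [show n * k + 0 * n * q = n * k by ring]
    exact this
  rw [hdiff]
  have hQ : (∏ j ∈ Finset.range m', L (j + 1) / F (j + 1))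
      = (∏ j ∈ Finset.range m', L (j + 1)) / ∏ j ∈ Finset.range m', F (j + 1) :=
    Finset.prod_div_distrib _ _
  rw [hQ]
  have hPF : (∏ j ∈ Finset.range m', F (j + 1)) ≠ 0 :=
    Finset.prod_ne_zero_iff.mpr (fun j _ => hFne _)
  have hfd : (0 : ℝ) < (Nat.fib ((m' + 1) * n * q) : ℝ) := fibR_pos (by positivity)
  have hs : (-1 : ℝ) ^ k * (-1 : ℝ) ^ k = 1 := by
    rw [← pow_add]
    exact Even.neg_one_pow ⟨k, rfl⟩
  have E : ∀ PL PF f0 fm fd s : ℝ, PF ≠ 0 → f0 ≠ 0 → fm ≠ 0 → fd ≠ 0 → s * s = 1 →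
      PL / (PF * f0 * fm) = 1 / (2 * fd) * (s * (PL / PF * (2 * s * fd / (f0 * fm)))) := by
    intro PL PF f0 fm fd s h1 h2 h3 h4 h5
    field_simp
    linear_combination (-PL) * h5
  exact E _ _ _ _ _ _ hPF (hFne 0) (hFne (m' + 1)) (ne_of_gt hfd) hs

lemma comp_tendsto (n c : ℕ) (hn : 0 < n) :
    Tendsto (fun N : ℕ => (lucas (n * N + c) : ℝ) / (Nat.fib (n * N + c) : ℝ)) atTop
      (𝓝 (√5)) := by
  apply g_tendsto.comp
  apply tendsto_atTop_mono (f := id) (fun N => ?_) tendsto_id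
  calc N = 1 * N := (one_mul N).symm
    _ ≤ n * N := Nat.mul_le_mul_right N hn
    _ ≤ n * N + c := Nat.le_add_right _ _

/-- Theorem (`n` odd, `q` even):
`Σ_{k=1}^{∞} (Π_{j=1}^{m−1} L_{nk+jnq}) / (Π_{j=0}^{m} F_{nk+jnq})
  = (1/(2F_{mnq})) Σ_{k=1}^{q} (−1)^k Π_{j=0}^{m−1} L_{nk+jnq}/F_{nk+jnq}`. -/
theorem stmt_4 (m n q : ℕ) (hm : 0 < m) (hn : 0 < n) (hq : 0 < q)
    (hnodd : Odd n) (hqeven : Even q) :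
    Tendsto (fun N => ∑ k ∈ Finset.Icc 1 N,
        (∏ j ∈ Finset.Icc 1 (m - 1), (lucas (n * k + j * n * q) : ℝ)) /
          ∏ j ∈ Finset.range (m + 1), (Nat.fib (n * k + j * n * q) : ℝ))
      atTop
      (𝓝 ((1 / (2 * (Nat.fib (m * n * q) : ℝ))) *
        ∑ k ∈ Finset.Icc 1 q, (-1 : ℝ) ^ k * ∏ j ∈ Finset.range m,
          (lucas (n * k + j * n * q) : ℝ) / (Nat.fib (n * k + j * n * q) : ℝ))) := by
  set c : ℝ := 1 / (2 * (Nat.fib (m * n * q) : ℝ)) with hc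
  set H : ℕ → ℝ := fun k => (-1 : ℝ) ^ k * ∏ j ∈ Finset.range m,
    (lucas (n * k + j * n * q) : ℝ) / (Nat.fib (n * k + j * n * q) : ℝ) with hH
  have htarget : (∑ k ∈ Finset.Icc 1 q, (-1 : ℝ) ^ k * ∏ j ∈ Finset.range m,
      (lucas (n * k + j * n * q) : ℝ) / (Nat.fib (n * k + j * n * q) : ℝ))
      = ∑ k ∈ Finset.Icc 1 q, H k := rfl
  rw [htarget]
  -- G and its limit
  set G : ℕ → ℝ := fun k => ∏ j ∈ Finset.range m,
    (lucas (n * k + j * n * q) : ℝ) / (Nat.fib (n * k + j * n * q) : ℝ) with hG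
  set C : ℝ := (√5) ^ m with hC
  have hGlim : ∀ j : ℕ, Tendsto (fun N => G (N + j)) atTop (𝓝 C) := by
    intro j
    have : C = ∏ _i ∈ Finset.range m, (√5) := by rw [Finset.prod_const, hC, Finset.card_range]
    rw [this]
    apply tendsto_finset_prod
    intro i _
    have h1 := comp_tendsto n (n * j + i * n * q) hn
    apply h1.congr
    intro N
    congr 2 <;> ring
  -- partial sums
  have key1 : ∀ N, q ≤ N →
      (∑ k ∈ Finset.Icc 1 N,
        (∏ j ∈ Finset.Icc 1 (m - 1), (lucas (n * k + j * n * q) : ℝ)) /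
          ∏ j ∈ Finset.range (m + 1), (Nat.fib (n * k + j * n * q) : ℝ))
      = c * ((∑ k ∈ Finset.Icc 1 q, H k) - ∑ k ∈ Finset.Ioc N (N + q), H k) := by
    intro N hN
    have hstep : ∀ k ∈ Finset.Icc 1 N,
        (∏ j ∈ Finset.Icc 1 (m - 1), (lucas (n * k + j * n * q) : ℝ)) /
          ∏ j ∈ Finset.range (m + 1), (Nat.fib (n * k + j * n * q) : ℝ)
        = c * (H k - H (k + q)) := by
      intro k hk
      have hk1 : 0 < k := by simp [Finset.mem_Icc] at hk; omega
      have := term_eq m n q k hm hn hq hk1 hnodd hqeven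
      rw [this]
    rw [Finset.sum_congr rfl hstep, ← Finset.mul_sum]
    congr 1
    rw [Finset.sum_sub_distrib]
    have h1 : ∑ k ∈ Finset.Icc 1 N, H (k + q) = ∑ k ∈ Finset.Icc (1 + q) (N + q), H k := by
      rw [← Finset.map_add_right_Icc, Finset.sum_map]
      rfl
    rw [h1]
    have e1 : Finset.Icc 1 N = Finset.Ioc 0 N := Finset.Icc_add_one_left_eq_Ioc 0 N
    have e2 : Finset.Icc 1 q = Finset.Ioc 0 q := Finset.Icc_add_one_left_eq_Ioc 0 q
    have e3 : Finset.Icc (1 + q) (N + q) = Finset.Ioc q (N + q) := by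
      rw [Nat.add_comm 1 q]
      exact Finset.Icc_add_one_left_eq_Ioc q (N + q)
    rw [e1, e2, e3]
    have c1 := Finset.sum_Ioc_consecutive H (Nat.zero_le q) hN
    have c2 := Finset.sum_Ioc_consecutive H hN (Nat.le_add_right N q)
    linarith
  have hB : Tendsto (fun N => ∑ k ∈ Finset.Ioc N (N + q), H k) atTop (𝓝 0) := by
    have hrw : ∀ N, (∑ k ∈ Finset.Ioc N (N + q), H k) = ∑ j ∈ Finset.Ioc 0 q, H (N + j) := by
      intro N
      have : Finset.Ioc N (N + q) = (Finset.Ioc 0 q).map (addLeftEmbedding N) := by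
        rw [Finset.map_add_left_Ioc]
        simp
      rw [this, Finset.sum_map]
      rfl
    simp only [hrw]
    have hdecomp : ∀ N, (∑ j ∈ Finset.Ioc 0 q, H (N + j))
        = ∑ j ∈ Finset.Ioc 0 q, (-1 : ℝ) ^ (N + j) * (G (N + j) - C) := by
      intro N
      have hsum0 : ∑ j ∈ Finset.Ioc 0 q, (-1 : ℝ) ^ j = 0 := by
        rw [← Finset.Ico_add_one_add_one_eq_Ioc, Finset.sum_Ico_eq_sum_range]
        show ∑ j ∈ Finset.range q, (-1 : ℝ) ^ (1 + j) = 0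
        have hterm : ∀ j : ℕ, (-1 : ℝ) ^ (1 + j) = -((-1 : ℝ) ^ j) := fun j => by
          rw [pow_add, pow_one]; ring
        rw [Finset.sum_congr rfl (fun j _ => hterm j), Finset.sum_neg_distrib,
          neg_one_geom_sum, if_pos hqeven, neg_zero]
      have expand : ∀ j : ℕ, H (N + j) = (-1 : ℝ) ^ (N + j) * (G (N + j) - C)
          + (-1 : ℝ) ^ N * C * (-1 : ℝ) ^ j := by
        intro j
        rw [hH]
        simp only []
        have : G (N + j) = ∏ x ∈ Finset.range m,
            (lucas (n * (N + j) + x * n * q) : ℝ) / (Nat.fib (n * (N + j) + x * n * q) : ℝ) := rfl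
        rw [← this, pow_add]
        ring
      rw [Finset.sum_congr rfl (fun j _ => expand j), Finset.sum_add_distrib,
        ← Finset.mul_sum, hsum0, mul_zero, add_zero]
    simp only [hdecomp]
    rw [show (0 : ℝ) = ∑ _j ∈ Finset.Ioc 0 q, (0 : ℝ) by simp]
    apply tendsto_finset_sum
    intro j _
    have habs : Tendsto (fun N => |G (N + j) - C|) atTop (𝓝 0) := by
      have h0 := (hGlim j).sub (tendsto_const_nhds (x := C))
      rw [sub_self] at h0
      simpa using h0.abs
    apply squeeze_zero_norm (fun N => ?_) habs
    rw [norm_mul, norm_pow, norm_neg, norm_one, one_pow, one_mul, Real.norm_eq_abs]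
  have key2 : Tendsto (fun N => c * ((∑ k ∈ Finset.Icc 1 q, H k)
      - ∑ k ∈ Finset.Ioc N (N + q), H k)) atTop (𝓝 (c * ∑ k ∈ Finset.Icc 1 q, H k)) := by
    have := (tendsto_const_nhds (x := ∑ k ∈ Finset.Icc 1 q, H k)).sub hB
    rw [sub_zero] at this
    exact this.const_mul c
  refine Tendsto.congr' ?_ key2
  filter_upwards [eventually_ge_atTop q] with N hN
  exact (key1 N hN).symm
end

section
/- Let m, n, q, p be positive integers with n odd and q even. Then the series Σ_{k=1}^{∞} ( Π_{j=1}^{m−1} F_{nk+jnq+np} ) / ( Π_{j=0}^{m} F_{nk+jnq} ) converges, and its sum equals (1 / (F_{mnq}·F_{np})) · Σ_{k=1}^{q} (−1)^{k} Π_{j=0}^{m−1} ( F_{nk+jnq+np} / F_{nk+jnq} ). -/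
open Filter Topology

open Real goldenRatio

private lemma fib_pos_real {x : ℕ} (hx : 0 < x) : (0:ℝ) < Nat.fib x := by
  exact_mod_cast Nat.fib_pos.mpr hx

private lemma catalanFib (a b c : ℕ) :
    (Nat.fib (a+b) : ℝ) * Nat.fib (a+c) - Nat.fib a * Nat.fib (a+b+c)
      = (-1)^a * Nat.fib b * Nat.fib c := by
  have h5 : (√5 : ℝ) ≠ 0 := ne_of_gt (Real.sqrt_pos.mpr (by norm_num))
  have hneg : ((-1:ℝ))^a = (φ*ψ)^a := by rw [goldenRatio_mul_goldenConj]
  simp only [Real.coe_fib_eq, hneg, mul_pow, pow_add]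
  field_simp
  ring

private lemma alg_ratio (A B s : ℝ) (hA : A ≠ 0) (hs : s ≠ 0) (x c : ℕ)
    (hd : A^x - B^x ≠ 0) :
    ((A^(x+c) - B^(x+c))/s) / ((A^x - B^x)/s)
      = A^c * (1 - (B/A)^(x+c)) / (1 - (B/A)^x) := by
  have hAx : A^x ≠ 0 := pow_ne_zero _ hA
  have hAxc : A^(x+c) ≠ 0 := pow_ne_zero _ hA
  have h1 : 1 - (B/A)^x = (A^x - B^x)/A^x := by rw [div_pow]; field_simp
  have h2 : 1 - (B/A)^(x+c) = (A^(x+c) - B^(x+c))/A^(x+c) := by rw [div_pow]; field_simp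
  rw [h1, h2]
  rw [div_div_div_cancel_right₀, pow_add]
  · field_simp
  · exact hs

private lemma fib_ratio_tendsto (c : ℕ) :
    Tendsto (fun x : ℕ => (Nat.fib (x + c) : ℝ) / Nat.fib x) atTop (𝓝 (φ ^ c)) := by
  have h5 : (√5 : ℝ) ≠ 0 := ne_of_gt (Real.sqrt_pos.mpr (by norm_num))
  have hr : |ψ/φ| < 1 := by
    rw [abs_div, abs_of_pos goldenRatio_pos, div_lt_one goldenRatio_pos]
    calc |ψ| < 1 := abs_lt.mpr ⟨neg_one_lt_goldenConj, goldenConj_neg.trans one_pos⟩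
    _ < φ := one_lt_goldenRatio
  have h0 : Tendsto (fun x : ℕ => (ψ/φ)^x) atTop (𝓝 0) :=
    tendsto_pow_atTop_nhds_zero_of_abs_lt_one hr
  have h1 : Tendsto (fun x : ℕ => φ^c * (1 - (ψ/φ)^(x+c)) / (1 - (ψ/φ)^x)) atTop (𝓝 (φ^c)) := by
    have hnum : Tendsto (fun x : ℕ => φ^c * (1 - (ψ/φ)^(x+c))) atTop (𝓝 (φ^c * (1 - 0))) :=
      tendsto_const_nhds.mul (tendsto_const_nhds.sub (h0.comp (tendsto_add_atTop_nat c)))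
    have hden : Tendsto (fun x : ℕ => 1 - (ψ/φ)^x) atTop (𝓝 (1 - 0)) :=
      tendsto_const_nhds.sub h0
    simpa [Pi.div_def] using hnum.div hden (by norm_num)
  refine Tendsto.congr' ?_ h1
  filter_upwards [eventually_ge_atTop 1] with x hx
  have hfib : (0:ℝ) < Nat.fib x := fib_pos_real hx
  have hd : (φ:ℝ)^x - ψ^x ≠ 0 := by
    have h : (φ:ℝ)^x - ψ^x = √5 * Nat.fib x := by
      rw [Real.coe_fib_eq]; field_simp
    rw [h]
    positivity
  rw [Real.coe_fib_eq, Real.coe_fib_eq]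
  exact (alg_ratio φ ψ (√5) goldenRatio_ne_zero h5 x c hd).symm

private lemma tele (b : ℕ → ℝ) (q N : ℕ) :
    ∑ k ∈ Finset.Icc 1 N, (b (k+q) - b k)
      = (∑ k ∈ Finset.Ioc N (N+q), b k) - ∑ k ∈ Finset.Ioc 0 q, b k := by
  rw [Finset.sum_sub_distrib]
  have h1 : ∑ k ∈ Finset.Icc 1 N, b (k+q) = ∑ k ∈ Finset.Ioc q (N+q), b k := by
    have hIcc : Finset.Ioc q (N+q) = Finset.Icc (1+q) (N+q) := by
      rw [Nat.add_comm 1 q, Finset.Icc_add_one_left_eq_Ioc]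
    rw [hIcc, ← Finset.map_add_right_Icc, Finset.sum_map]
    simp [addRightEmbedding_apply]
  have h0 : Finset.Icc 1 N = Finset.Ioc 0 N := by ext x; simp; omega
  rw [h1, h0]
  have h2 := Finset.sum_Ioc_consecutive b (Nat.zero_le N) (Nat.le_add_right N q)
  have h3 := Finset.sum_Ioc_consecutive b (Nat.zero_le q) (Nat.le_add_left q N)
  linarith

private lemma tail_tendsto (a : ℕ → ℝ) (L : ℝ) (q : ℕ) (hqeven : Even q)
    (ha : Tendsto a atTop (𝓝 L)) :
    Tendsto (fun N => ∑ k ∈ Finset.Ioc N (N+q), (-1:ℝ)^(k+1) * a k) atTop (𝓝 0) := by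
  have hre : ∀ N, ∑ k ∈ Finset.Ioc N (N+q), (-1:ℝ)^(k+1) * a k
      = ∑ i ∈ Finset.range q, (-1:ℝ)^(N+1+i+1) * a (N+1+i) := by
    intro N
    rw [show Finset.Ioc N (N+q) = Finset.Ico (N+1) (N+q+1) from by ext x; simp,
        Finset.sum_Ico_eq_sum_range]
    exact Finset.sum_congr (by congr 1; omega) (fun i _ => rfl)
  have hz : ∀ N, ∑ i ∈ Finset.range q, (-1:ℝ)^(N+1+i+1) * L = 0 := by
    intro N
    calc ∑ i ∈ Finset.range q, (-1:ℝ)^(N+1+i+1) * L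
        = ∑ i ∈ Finset.range q, ((-1:ℝ)^(N+2) * L) * (-1)^i :=
          Finset.sum_congr rfl (fun i _ => by
            rw [show N+1+i+1 = (N+2)+i from by ring, pow_add]; ring)
      _ = ((-1:ℝ)^(N+2) * L) * ∑ i ∈ Finset.range q, (-1:ℝ)^i := by
          rw [Finset.mul_sum]
      _ = 0 := by rw [neg_one_geom_sum, if_pos hqeven, mul_zero]
  apply squeeze_zero_norm (a := fun N => ∑ i ∈ Finset.range q, |a (N+1+i) - L|)
  · intro N
    rw [Real.norm_eq_abs, hre N]
    have hsplit : ∑ i ∈ Finset.range q, (-1:ℝ)^(N+1+i+1) * a (N+1+i)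
        = ∑ i ∈ Finset.range q, (-1:ℝ)^(N+1+i+1) * (a (N+1+i) - L) := by
      have h4 : ∑ i ∈ Finset.range q, (-1:ℝ)^(N+1+i+1) * a (N+1+i)
          = (∑ i ∈ Finset.range q, (-1:ℝ)^(N+1+i+1) * (a (N+1+i) - L))
            + ∑ i ∈ Finset.range q, (-1:ℝ)^(N+1+i+1) * L := by
        rw [← Finset.sum_add_distrib]
        exact Finset.sum_congr rfl (fun i _ => by ring)
      rw [h4, hz N, add_zero]
    rw [hsplit]
    calc |∑ i ∈ Finset.range q, (-1:ℝ)^(N+1+i+1) * (a (N+1+i) - L)|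
        ≤ ∑ i ∈ Finset.range q, |(-1:ℝ)^(N+1+i+1) * (a (N+1+i) - L)| :=
          Finset.abs_sum_le_sum_abs _ _
      _ = ∑ i ∈ Finset.range q, |a (N+1+i) - L| :=
          Finset.sum_congr rfl (fun i _ => by
            rw [abs_mul, abs_pow, abs_neg, abs_one, one_pow, one_mul])
  · have hsum : Tendsto (fun N => ∑ i ∈ Finset.range q, |a (N+1+i) - L|) atTop
        (𝓝 (∑ _i ∈ Finset.range q, (0:ℝ))) := by
      apply tendsto_finset_sum
      intro i _
      have h1 : Tendsto (fun N : ℕ => a (N + (1+i))) atTop (𝓝 L) :=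
        ha.comp (tendsto_add_atTop_nat (1+i))
      have h2 : Tendsto (fun N : ℕ => a (N+1+i) - L) atTop (𝓝 (L - L)) := by
        refine Tendsto.sub ?_ tendsto_const_nhds
        exact h1.congr (fun N => by rw [add_assoc])
      simpa using h2.abs
    simpa using hsum
noncomputable def aa (m n q p : ℕ) (k : ℕ) : ℝ :=
  ∏ j ∈ Finset.range m, (Nat.fib (n * k + j * n * q + n * p) : ℝ) / (Nat.fib (n * k + j * n * q) : ℝ)

noncomputable def bb (m n q p : ℕ) (k : ℕ) : ℝ := (-1)^(k+1) * aa m n q p k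

private lemma key_step (m n q p k : ℕ) (hm : 0 < m) (hn : 0 < n) (hp : 0 < p)
    (hk : 0 < k) (hnodd : Odd n) (hqeven : Even q) :
    bb m n q p (k+q) - bb m n q p k =
      ((Nat.fib (m * n * q) : ℝ) * (Nat.fib (n * p) : ℝ)) *
        ((∏ j ∈ Finset.Icc 1 (m - 1), (Nat.fib (n * k + j * n * q + n * p) : ℝ)) /
          ∏ j ∈ Finset.range (m + 1), (Nat.fib (n * k + j * n * q) : ℝ)) := by
  have hm1 : m - 1 + 1 = m := Nat.succ_pred_eq_of_pos hm
  have hk0 : 0 < n * k := Nat.mul_pos hn hk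
  have hu : ∀ j : ℕ, (0:ℝ) < Nat.fib (n * k + j * n * q) :=
    fun j => fib_pos_real (Nat.add_pos_left hk0 _)
  have hv : ∀ j : ℕ, (0:ℝ) < Nat.fib (n * k + j * n * q + n * p) :=
    fun j => fib_pos_real (Nat.add_pos_left (Nat.add_pos_left hk0 _) _)
  -- decompose aa k
  have ha1 : aa m n q p k =
      (∏ j ∈ Finset.range (m-1),
          (Nat.fib (n * k + (j+1) * n * q + n * p) : ℝ) / (Nat.fib (n * k + (j+1) * n * q) : ℝ)) *
        ((Nat.fib (n * k + n * p) : ℝ) / (Nat.fib (n * k) : ℝ)) := by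
    rw [aa, ← hm1, Finset.prod_range_succ']
    norm_num
  have ha2 : aa m n q p (k+q) =
      (∏ j ∈ Finset.range (m-1),
          (Nat.fib (n * k + (j+1) * n * q + n * p) : ℝ) / (Nat.fib (n * k + (j+1) * n * q) : ℝ)) *
        ((Nat.fib (n * k + m * n * q + n * p) : ℝ) / (Nat.fib (n * k + m * n * q) : ℝ)) := by
    rw [aa]
    rw [Finset.prod_congr rfl (fun j _ => by
      rw [show n * (k+q) + j * n * q + n * p = n * k + (j+1) * n * q + n * p from by ring,
          show n * (k+q) + j * n * q = n * k + (j+1) * n * q from by ring])]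
    rw [← hm1, Finset.prod_range_succ, hm1]
  -- decompose denominator product
  have hQ : (∏ j ∈ Finset.range (m + 1), (Nat.fib (n * k + j * n * q) : ℝ)) =
      ((∏ j ∈ Finset.range (m-1), (Nat.fib (n * k + (j+1) * n * q) : ℝ)) *
        (Nat.fib (n * k) : ℝ)) * (Nat.fib (n * k + m * n * q) : ℝ) := by
    rw [Finset.prod_range_succ]
    congr 1
    rw [← hm1, Finset.prod_range_succ']
    norm_num
  -- numerator product
  have hP : (∏ j ∈ Finset.Icc 1 (m - 1), (Nat.fib (n * k + j * n * q + n * p) : ℝ)) =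
      ∏ j ∈ Finset.range (m-1), (Nat.fib (n * k + (j+1) * n * q + n * p) : ℝ) := by
    rw [← Finset.Ico_add_one_right_eq_Icc, Finset.prod_Ico_eq_prod_range]
    apply Finset.prod_congr (by simp)
    intro i _
    rw [show 1 + i = i + 1 from by ring]
  -- catalan
  have hcat := catalanFib (n*k) (m*n*q) (n*p)
  have hsgn : ((-1:ℝ))^(n*k) = (-1)^k := by
    rw [pow_mul, Odd.neg_one_pow hnodd]
  rw [hsgn] at hcat
  have hsq : ((-1:ℝ))^k * (-1)^k = 1 := by
    rw [← pow_add, Even.neg_one_pow ⟨k, by ring⟩]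
  have hsgnq : ((-1:ℝ))^(k+q+1) = (-1)^(k+1) := by
    rw [show k+q+1 = (k+1)+q from by ring, pow_add, Even.neg_one_pow hqeven, mul_one]
  -- assemble
  rw [bb, bb, ha1, ha2, hsgnq, hQ, hP, Finset.prod_div_distrib]
  have hU : (∏ j ∈ Finset.range (m-1), (Nat.fib (n * k + (j+1) * n * q) : ℝ)) ≠ 0 :=
    ne_of_gt (Finset.prod_pos (fun j _ => hu (j+1)))
  have hF0 : (Nat.fib (n*k) : ℝ) ≠ 0 := by have := hu 0; simp only [Nat.zero_mul, Nat.add_zero, zero_mul, add_zero] at this; exact ne_of_gt this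
  have hFm : (Nat.fib (n*k+m*n*q) : ℝ) ≠ 0 := ne_of_gt (hu m)
  have hes : ((-1:ℝ))^(k+1) = -(-1)^k := by rw [pow_succ]; ring
  field_simp
  rw [hes]
  linear_combination ((-1:ℝ)^k *
      (∏ x ∈ Finset.range (m-1), (Nat.fib (n*k+(x+1)*n*q+n*p) : ℝ))) * hcat +
    ((Nat.fib (m*n*q) : ℝ) * (Nat.fib (n*p) : ℝ) *
      (∏ x ∈ Finset.range (m-1), (Nat.fib (n*k+(x+1)*n*q+n*p) : ℝ))) * hsq


/-- Theorem (`n` odd, `q` even):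
`Σ_{k=1}^{∞} (Π_{j=1}^{m−1} F_{nk+jnq+np}) / (Π_{j=0}^{m} F_{nk+jnq})
  = (1/(F_{mnq} F_{np})) Σ_{k=1}^{q} (−1)^k Π_{j=0}^{m−1} F_{nk+jnq+np}/F_{nk+jnq}`. -/
theorem stmt_9 (m n q p : ℕ) (hm : 0 < m) (hn : 0 < n) (hq : 0 < q) (hp : 0 < p)
    (hnodd : Odd n) (hqeven : Even q) :
    Tendsto (fun N => ∑ k ∈ Finset.Icc 1 N,
        (∏ j ∈ Finset.Icc 1 (m - 1), (Nat.fib (n * k + j * n * q + n * p) : ℝ)) /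
          ∏ j ∈ Finset.range (m + 1), (Nat.fib (n * k + j * n * q) : ℝ))
      atTop
      (𝓝 ((1 / ((Nat.fib (m * n * q) : ℝ) * (Nat.fib (n * p) : ℝ))) *
        ∑ k ∈ Finset.Icc 1 q, (-1 : ℝ) ^ k * ∏ j ∈ Finset.range m,
          (Nat.fib (n * k + j * n * q + n * p) : ℝ) / (Nat.fib (n * k + j * n * q) : ℝ))) := by
  have hD : (0:ℝ) < (Nat.fib (m * n * q) : ℝ) * (Nat.fib (n * p) : ℝ) :=
    mul_pos (fib_pos_real (Nat.mul_pos (Nat.mul_pos hm hn) hq))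
      (fib_pos_real (Nat.mul_pos hn hp))
  -- limit of aa
  have hL : Tendsto (aa m n q p) atTop (𝓝 (∏ _j ∈ Finset.range m, φ^(n*p))) := by
    unfold aa
    apply tendsto_finset_prod
    intro j _
    have hmono : Tendsto (fun k => n * k + j * n * q) atTop atTop := by
      have h1 : Tendsto (fun k => n * k) atTop atTop :=
        tendsto_atTop_mono (fun k => Nat.le_mul_of_pos_left k hn) tendsto_id
      exact tendsto_atTop_mono (fun k => Nat.le_add_right _ _) h1
    have h2 := (fib_ratio_tendsto (n*p)).comp hmono
    exact h2.congr (fun k => rfl)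
  have htail : Tendsto (fun N => ∑ k ∈ Finset.Ioc N (N+q), bb m n q p k) atTop (𝓝 0) :=
    tail_tendsto (aa m n q p) _ q hqeven hL
  -- partial sums
  have hsum : ∀ N, (∑ k ∈ Finset.Icc 1 N,
      (∏ j ∈ Finset.Icc 1 (m - 1), (Nat.fib (n * k + j * n * q + n * p) : ℝ)) /
        ∏ j ∈ Finset.range (m + 1), (Nat.fib (n * k + j * n * q) : ℝ))
      = ((∑ k ∈ Finset.Ioc N (N+q), bb m n q p k) - ∑ k ∈ Finset.Ioc 0 q, bb m n q p k)
          / ((Nat.fib (m * n * q) : ℝ) * (Nat.fib (n * p) : ℝ)) := by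
    intro N
    rw [← tele (bb m n q p) q N, Finset.sum_div]
    apply Finset.sum_congr rfl
    intro k hk
    have hk1 : 0 < k := by
      simp only [Finset.mem_Icc] at hk
      omega
    rw [key_step m n q p k hm hn hp hk1 hnodd hqeven]
    exact (mul_div_cancel_left₀ _ (ne_of_gt hD)).symm
  -- value equality
  have hval : ((0:ℝ) - ∑ k ∈ Finset.Ioc 0 q, bb m n q p k)
        / ((Nat.fib (m * n * q) : ℝ) * (Nat.fib (n * p) : ℝ))
      = (1 / ((Nat.fib (m * n * q) : ℝ) * (Nat.fib (n * p) : ℝ))) *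
        ∑ k ∈ Finset.Icc 1 q, (-1 : ℝ) ^ k * ∏ j ∈ Finset.range m,
          (Nat.fib (n * k + j * n * q + n * p) : ℝ) / (Nat.fib (n * k + j * n * q) : ℝ) := by
    rw [show Finset.Ioc 0 q = Finset.Icc 1 q from by ext x; simp; omega]
    have hS : (0:ℝ) - ∑ k ∈ Finset.Icc 1 q, bb m n q p k
        = ∑ k ∈ Finset.Icc 1 q, (-1 : ℝ) ^ k * aa m n q p k := by
      rw [zero_sub, ← Finset.sum_neg_distrib]
      exact Finset.sum_congr rfl (fun k _ => by rw [bb, pow_succ]; ring)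
    rw [hS]
    rw [one_div, div_eq_mul_inv, mul_comm]
    rfl
  refine Tendsto.congr (fun N => (hsum N).symm) ?_
  rw [← hval]
  exact ((htail.sub tendsto_const_nhds).div_const _)
end

section
/- Let m, n, q be positive integers. Then the series Σ_{k=1}^{∞} (−1)^{nk−1} · ( Π_{j=1}^{m−1} F_{nk+jnq} ) / ( Π_{j=0}^{m} L_{nk+jnq} ) converges, and its sum equals (1 / (2 F_{mnq})) · Σ_{k=1}^{q} Π_{j=0}^{m−1} ( F_{nk+jnq} / L_{nk+jnq} ) − q / (2 F_{mnq} · √(5^m)). -/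
open Filter Topology

open Real goldenRatio

lemma lucas_add_fib : ∀ t, lucas t + Nat.fib t = 2 * Nat.fib (t + 1) := by
  intro t
  induction t using Nat.twoStepInduction with
  | zero => rfl
  | one => rfl
  | more t ih1 ih2 =>
    show lucas (t+1) + lucas t + Nat.fib (t+2) = _
    rw [Nat.fib_add_two, Nat.fib_add_two (n := t+1)]
    omega

lemma lucas_pos : ∀ t, 0 < lucas t := by
  intro t
  induction t using Nat.twoStepInduction with
  | zero => norm_num [lucas]
  | one => norm_num [lucas]
  | more t ih1 ih2 => show 0 < lucas (t+1) + lucas t; omega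

lemma cassini (b : ℕ) :
    (Nat.fib (b+1) : ℤ) * Nat.fib (b+1) - Nat.fib b * Nat.fib (b+2) = (-1)^b := by
  induction b with
  | zero => simp
  | succ b ih =>
    have h1 : (Nat.fib (b+2) : ℤ) = Nat.fib (b+1) + Nat.fib b := by
      rw [Nat.fib_add_two]; push_cast; ring
    have h2 : (Nat.fib (b+3) : ℤ) = Nat.fib (b+2) + Nat.fib (b+1) := by
      rw [show b+3 = (b+1)+2 from rfl, Nat.fib_add_two]; push_cast; ring
    rw [show b+1+1 = b+2 from rfl, show b+1+2 = b+3 from rfl]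
    rw [h2, pow_succ]
    nlinarith [ih, h1]

lemma docagne (b c : ℕ) :
    (Nat.fib (b+c) : ℤ) * Nat.fib (b+1) - Nat.fib b * Nat.fib (b+c+1) = (-1)^b * Nat.fib c := by
  induction c using Nat.twoStepInduction with
  | zero => simp
  | one => simpa using cassini b
  | more c ih1 ih2 =>
    have h1 : (Nat.fib (b+c+2) : ℤ) = Nat.fib (b+c+1) + Nat.fib (b+c) := by
      rw [show b+c+2 = (b+c)+2 from rfl, Nat.fib_add_two]; push_cast; ring
    have h2 : (Nat.fib (b+c+3) : ℤ) = Nat.fib (b+c+2) + Nat.fib (b+c+1) := by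
      rw [show b+c+3 = (b+c+1)+2 from rfl, Nat.fib_add_two]; push_cast; ring
    have h3 : (Nat.fib (c+2) : ℤ) = Nat.fib (c+1) + Nat.fib c := by
      rw [Nat.fib_add_two]; push_cast; ring
    have e1 : b + (c+2) = b+c+2 := by ring
    have e2 : b + (c+2) + 1 = b+c+3 := by ring
    have e3 : b + (c+1) = b+c+1 := by ring
    have e4 : b + (c+1) + 1 = b+c+2 := by ring
    rw [e1, show b+c+2+1 = b+c+3 from rfl, h1, h2, h1, h3]
    rw [e3, show b+c+1+1 = b+c+2 from rfl, h1] at ih2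
    linarith [ih1, ih2]

lemma lucas_real (t : ℕ) : (lucas t : ℝ) = φ ^ t + ψ ^ t := by
  have h := lucas_add_fib t
  have hcast : (lucas t : ℝ) = 2 * Nat.fib (t+1) - Nat.fib t := by
    have := congrArg (Nat.cast : ℕ → ℝ) h; push_cast at this; linarith
  have h5 : Real.sqrt 5 ≠ 0 := by positivity
  have hφ : 2 * φ - 1 = Real.sqrt 5 := by
    have := goldenRatio_add_goldenConj; have := goldenRatio_sub_goldenConj; linarith
  have hψ : 2 * ψ - 1 = -Real.sqrt 5 := by
    have := goldenRatio_add_goldenConj; have := goldenRatio_sub_goldenConj; linarith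
  rw [hcast, Real.coe_fib_eq, Real.coe_fib_eq]
  field_simp
  linear_combination (φ ^ t) * hφ - (ψ ^ t) * hψ

lemma key_id (b c : ℕ) :
    (Nat.fib (b+c) : ℝ) * lucas b - Nat.fib b * lucas (b+c) = (-1)^b * 2 * Nat.fib c := by
  have hb := lucas_add_fib b
  have hbc := lucas_add_fib (b+c)
  have h1 : (lucas b : ℝ) = 2 * Nat.fib (b+1) - Nat.fib b := by
    have := congrArg (Nat.cast : ℕ → ℝ) hb; push_cast at this; linarith
  have h2 : (lucas (b+c) : ℝ) = 2 * Nat.fib (b+c+1) - Nat.fib (b+c) := by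
    have := congrArg (Nat.cast : ℕ → ℝ) hbc; push_cast at this; linarith
  have h3 := docagne b c
  have h3' : (Nat.fib (b+c) : ℝ) * Nat.fib (b+1) - Nat.fib b * Nat.fib (b+c+1) = (-1)^b * Nat.fib c := by
    have := congrArg (Int.cast : ℤ → ℝ) h3; push_cast at this; linarith
  rw [h1, h2]; linarith [h3']

lemma abs_ratio_lt_one : |ψ / φ| < 1 := by
  have h1 : (0:ℝ) < φ := goldenRatio_pos
  have h2 : ψ < 0 := goldenConj_neg
  have h3 : -1 < ψ := neg_one_lt_goldenConj
  have h4 : 1 < φ := one_lt_goldenRatio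
  rw [abs_div, abs_of_neg h2, abs_of_pos h1, div_lt_one h1]
  linarith

lemma fib_div_lucas_tendsto :
    Tendsto (fun t : ℕ => (Nat.fib t : ℝ) / (lucas t : ℝ)) atTop (𝓝 (1 / Real.sqrt 5)) := by
  have h5 : (0:ℝ) < Real.sqrt 5 := by positivity
  have hr := tendsto_pow_atTop_nhds_zero_of_abs_lt_one abs_ratio_lt_one
  have hlim : Tendsto (fun t : ℕ => (1 - (ψ/φ)^t) / (Real.sqrt 5 * (1 + (ψ/φ)^t))) atTop
      (𝓝 ((1 - 0) / (Real.sqrt 5 * (1 + 0)))) := by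
    apply Tendsto.div (tendsto_const_nhds.sub hr)
      (tendsto_const_nhds.mul (tendsto_const_nhds.add hr))
    simpa using h5.ne'
  have heq : ∀ t : ℕ, (Nat.fib t : ℝ) / (lucas t : ℝ)
      = (1 - (ψ/φ)^t) / (Real.sqrt 5 * (1 + (ψ/φ)^t)) := by
    intro t
    have hφ : φ ^ t ≠ 0 := (pow_pos goldenRatio_pos t).ne'
    have hl : (0:ℝ) < (lucas t : ℝ) := by exact_mod_cast lucas_pos t
    have hl' : φ ^ t + ψ ^ t ≠ 0 := by rw [← lucas_real]; exact hl.ne'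
    have e1 : (ψ/φ)^t = ψ^t/φ^t := div_pow ψ φ t
    have hden : 1 + ψ^t/φ^t ≠ 0 := by
      have h2 : 1 + ψ^t/φ^t = (φ^t+ψ^t)/φ^t := by field_simp
      rw [h2]
      exact div_ne_zero hl' hφ
    rw [Real.coe_fib_eq, lucas_real, e1]
    set x := ψ^t/φ^t with hxdef
    have hx : x * φ^t = ψ^t := div_mul_cancel₀ _ hφ
    rw [div_div, div_eq_div_iff (mul_ne_zero h5.ne' hl') (mul_ne_zero h5.ne' hden)]
    apply mul_right_cancel₀ hφ
    linear_combination (2 * Real.sqrt 5 * φ^t) * hx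
  have : ((1:ℝ) - 0) / (Real.sqrt 5 * (1 + 0)) = 1 / Real.sqrt 5 := by
    rw [sub_zero, add_zero, mul_one]
  rw [← this]
  exact hlim.congr (fun t => (heq t).symm)

lemma ratio_tendsto' (u : ℕ → ℕ) (hu : Tendsto u atTop atTop) :
    Tendsto (fun N => (Nat.fib (u N) : ℝ) / (lucas (u N) : ℝ)) atTop (𝓝 (1/Real.sqrt 5)) :=
  fib_div_lucas_tendsto.comp hu

lemma step (m' n q k : ℕ) (hn : 0 < n) (hq : 0 < q) (hk : 1 ≤ k) :
    (-1:ℝ)^(n*k-1) * (∏ j ∈ Finset.Icc 1 m', (Nat.fib (n*k+j*n*q):ℝ))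
      / ∏ j ∈ Finset.range (m'+2), (lucas (n*k+j*n*q):ℝ)
    = ((∏ j ∈ Finset.range (m'+1), (Nat.fib (n*k+j*n*q):ℝ)/(lucas (n*k+j*n*q):ℝ))
       - ∏ j ∈ Finset.range (m'+1), (Nat.fib (n*(k+q)+j*n*q):ℝ)/(lucas (n*(k+q)+j*n*q):ℝ))
      / (2*(Nat.fib ((m'+1)*n*q):ℝ)) := by
  have hL : ∀ t, (0:ℝ) < (lucas t : ℝ) := fun t => by exact_mod_cast lucas_pos t
  have hb : 1 ≤ n*k := Nat.one_le_iff_ne_zero.2 (by positivity)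
  have hfc : (0:ℝ) < (Nat.fib ((m'+1)*n*q):ℝ) := by
    exact_mod_cast Nat.fib_pos.2 (by positivity)
  -- shift second product
  have hrw2 : ∏ j ∈ Finset.range (m'+1), (Nat.fib (n*(k+q)+j*n*q):ℝ)/(lucas (n*(k+q)+j*n*q):ℝ)
      = ∏ j ∈ Finset.range (m'+1), (Nat.fib (n*k+(j+1)*n*q):ℝ)/(lucas (n*k+(j+1)*n*q):ℝ) :=
    Finset.prod_congr rfl fun j _ => by rw [show n*(k+q)+j*n*q = n*k+(j+1)*n*q from by ring]
  have hQ : ∏ j ∈ Finset.Icc 1 m', (Nat.fib (n*k+j*n*q):ℝ)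
      = ∏ j ∈ Finset.range m', (Nat.fib (n*k+(j+1)*n*q):ℝ) := by
    rw [← Finset.Ico_add_one_right_eq_Icc, Finset.prod_Ico_eq_prod_range]
    exact Finset.prod_congr rfl fun j _ => by rw [Nat.add_comm 1 j]
  have hR : ∏ j ∈ Finset.range (m'+2), (lucas (n*k+j*n*q):ℝ)
      = ((∏ j ∈ Finset.range m', (lucas (n*k+(j+1)*n*q):ℝ)) * (lucas (n*k):ℝ))
        * (lucas (n*k+(m'+1)*n*q):ℝ) := by
    rw [Finset.prod_range_succ, Finset.prod_range_succ']
    norm_num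
  have hA1 : ∏ j ∈ Finset.range (m'+1), (Nat.fib (n*k+j*n*q):ℝ)/(lucas (n*k+j*n*q):ℝ)
      = (∏ j ∈ Finset.range m', (Nat.fib (n*k+(j+1)*n*q):ℝ)/(lucas (n*k+(j+1)*n*q):ℝ))
        * ((Nat.fib (n*k):ℝ)/(lucas (n*k):ℝ)) := by
    rw [Finset.prod_range_succ']
    norm_num
  have hA2 : ∏ j ∈ Finset.range (m'+1), (Nat.fib (n*k+(j+1)*n*q):ℝ)/(lucas (n*k+(j+1)*n*q):ℝ)
      = (∏ j ∈ Finset.range m', (Nat.fib (n*k+(j+1)*n*q):ℝ)/(lucas (n*k+(j+1)*n*q):ℝ))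
        * ((Nat.fib (n*k+(m'+1)*n*q):ℝ)/(lucas (n*k+(m'+1)*n*q):ℝ)) := by
    rw [Finset.prod_range_succ]
  rw [hrw2, hQ, hR, hA1, hA2, Finset.prod_div_distrib]
  set p1 := ∏ j ∈ Finset.range m', (Nat.fib (n*k+(j+1)*n*q):ℝ) with hp1
  set p2 := ∏ j ∈ Finset.range m', (lucas (n*k+(j+1)*n*q):ℝ) with hp2def
  have hp2 : (0:ℝ) < p2 := Finset.prod_pos fun j _ => hL _
  have hid := key_id (n*k) ((m'+1)*n*q)
  have hsgn : (-1:ℝ)^(n*k) = -(-1:ℝ)^(n*k-1) := by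
    obtain ⟨t, ht⟩ : ∃ t, n*k = t+1 := ⟨n*k-1, by omega⟩
    rw [ht, pow_succ, Nat.add_sub_cancel]; ring
  rw [hsgn] at hid
  have hL0 := (hL (n*k)).ne'
  have hLm := (hL (n*k+(m'+1)*n*q)).ne'
  have hp2' := hp2.ne'
  field_simp
  linear_combination p1 * hid

/-- Theorem (Lucas denominators, general alternating sum):
`Σ_{k=1}^{∞} (−1)^{nk−1} (Π_{j=1}^{m−1} F_{nk+jnq}) / (Π_{j=0}^{m} L_{nk+jnq})
  = (1/(2F_{mnq})) Σ_{k=1}^{q} Π_{j=0}^{m−1} F_{nk+jnq}/L_{nk+jnq} − q/(2 F_{mnq} √(5^m))`. -/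
theorem stmt_10 (m n q : ℕ) (hm : 0 < m) (hn : 0 < n) (hq : 0 < q) :
    Tendsto (fun N => ∑ k ∈ Finset.Icc 1 N,
        (-1 : ℝ) ^ (n * k - 1) *
          (∏ j ∈ Finset.Icc 1 (m - 1), (Nat.fib (n * k + j * n * q) : ℝ)) /
          ∏ j ∈ Finset.range (m + 1), (lucas (n * k + j * n * q) : ℝ))
      atTop
      (𝓝 ((1 / (2 * (Nat.fib (m * n * q) : ℝ))) *
          (∑ k ∈ Finset.Icc 1 q, ∏ j ∈ Finset.range m,
            (Nat.fib (n * k + j * n * q) : ℝ) / (lucas (n * k + j * n * q) : ℝ))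
        - (q : ℝ) / (2 * (Nat.fib (m * n * q) : ℝ) * Real.sqrt (5 ^ m)))) := by
  obtain ⟨m', rfl⟩ : ∃ m', m = m'+1 := ⟨m-1, (Nat.succ_pred_eq_of_pos hm).symm⟩
  simp only [Nat.add_sub_cancel]
  set A : ℕ → ℝ := fun k => ∏ j ∈ Finset.range (m'+1),
    (Nat.fib (n*k+j*n*q):ℝ)/(lucas (n*k+j*n*q):ℝ) with hA
  have hfc : (0:ℝ) < (Nat.fib ((m'+1)*n*q):ℝ) := by
    exact_mod_cast Nat.fib_pos.2 (by positivity)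
  have h5 : (0:ℝ) < Real.sqrt 5 := by positivity
  have r1 : ∀ (M : ℕ) (f : ℕ → ℝ), ∑ k ∈ Finset.Icc 1 M, f k
      = ∑ i ∈ Finset.range M, f (1+i) := by
    intro M f
    rw [← Finset.Ico_add_one_right_eq_Icc, Finset.sum_Ico_eq_sum_range, Nat.add_sub_cancel]
  have hsum : ∀ N, q ≤ N →
      ∑ k ∈ Finset.Icc 1 N, ((-1:ℝ)^(n*k-1)
          * (∏ j ∈ Finset.Icc 1 m', (Nat.fib (n*k+j*n*q):ℝ))
          / ∏ j ∈ Finset.range (m'+1+1), (lucas (n*k+j*n*q):ℝ))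
      = ((∑ k ∈ Finset.Icc 1 q, A k) - ∑ i ∈ Finset.range q, A (1+N+i))
        / (2*(Nat.fib ((m'+1)*n*q):ℝ)) := by
    intro N hN
    have e0 : ∀ k ∈ Finset.Icc 1 N,
        (-1:ℝ)^(n*k-1) * (∏ j ∈ Finset.Icc 1 m', (Nat.fib (n*k+j*n*q):ℝ))
          / ∏ j ∈ Finset.range (m'+1+1), (lucas (n*k+j*n*q):ℝ)
        = (A k - A (k+q)) / (2*(Nat.fib ((m'+1)*n*q):ℝ)) := fun k hk =>
      step m' n q k hn hq (Finset.mem_Icc.1 hk).1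
    rw [Finset.sum_congr rfl e0, ← Finset.sum_div, Finset.sum_sub_distrib]
    congr 1
    obtain ⟨d, rfl⟩ : ∃ d, N = q + d := ⟨N - q, by omega⟩
    rw [r1 (q+d) A, r1 (q+d) (fun k => A (k+q)), r1 q A]
    have e1 : ∑ i ∈ Finset.range (q+d), A (1+i)
        = ∑ i ∈ Finset.range q, A (1+i) + ∑ i ∈ Finset.range d, A (1+i+q) := by
      rw [Finset.sum_range_add (fun i => A (1+i)) q d]
      congr 1
      exact Finset.sum_congr rfl fun i _ => by rw [show 1+(q+i) = 1+i+q from by omega]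
    have e2 : ∑ i ∈ Finset.range (q+d), A (1+i+q)
        = ∑ i ∈ Finset.range d, A (1+i+q) + ∑ i ∈ Finset.range q, A (1+(q+d)+i) := by
      rw [Nat.add_comm q d, Finset.sum_range_add (fun i => A (1+i+q)) d q]
      congr 1
      exact Finset.sum_congr rfl fun i _ => by rw [show 1+(d+i)+q = 1+(d+q)+i from by omega]
    rw [e1, e2]
    ring
  have hT : Tendsto (fun N => ∑ i ∈ Finset.range q, A (1+N+i)) atTop
      (𝓝 (q * (1/Real.sqrt 5)^(m'+1))) := by
    have hc : (q:ℝ) * (1/Real.sqrt 5)^(m'+1) = ∑ _i ∈ Finset.range q, ((1:ℝ)/Real.sqrt 5)^(m'+1) := by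
      rw [Finset.sum_const, Finset.card_range, nsmul_eq_mul]
    rw [hc]
    apply tendsto_finset_sum
    intro i _
    have hp : ((1/Real.sqrt 5:ℝ))^(m'+1) = ∏ _j ∈ Finset.range (m'+1), ((1:ℝ)/Real.sqrt 5) := by
      rw [Finset.prod_const, Finset.card_range]
    rw [hA, hp]
    apply tendsto_finset_prod
    intro j _
    apply ratio_tendsto' (fun N => n*(1+N+i)+j*n*q)
    apply tendsto_atTop_mono (fun N => ?_) tendsto_id
    have h1 : 1+N+i ≤ n*(1+N+i) := Nat.le_mul_of_pos_left _ hn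
    simp only [id]
    omega
  have hmain : Tendsto (fun N => ((∑ k ∈ Finset.Icc 1 q, A k) - ∑ i ∈ Finset.range q, A (1+N+i))
      / (2*(Nat.fib ((m'+1)*n*q):ℝ))) atTop
      (𝓝 (((∑ k ∈ Finset.Icc 1 q, A k) - q*(1/Real.sqrt 5)^(m'+1))
        / (2*(Nat.fib ((m'+1)*n*q):ℝ)))) :=
    (tendsto_const_nhds.sub hT).div_const _
  have hs : Real.sqrt (5^(m'+1)) = Real.sqrt 5^(m'+1) := by
    have h2 : ((Real.sqrt 5)^(m'+1))^2 = 5^(m'+1) := by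
      rw [← pow_mul, mul_comm, pow_mul, Real.sq_sqrt (by norm_num : (0:ℝ) ≤ 5)]
    rw [← h2, Real.sqrt_sq (by positivity)]
  have hval : (1 / (2 * (Nat.fib ((m'+1) * n * q) : ℝ))) * (∑ k ∈ Finset.Icc 1 q, A k)
        - (q : ℝ) / (2 * (Nat.fib ((m'+1) * n * q) : ℝ) * Real.sqrt (5 ^ (m'+1)))
      = ((∑ k ∈ Finset.Icc 1 q, A k) - q*(1/Real.sqrt 5)^(m'+1))
        / (2*(Nat.fib ((m'+1)*n*q):ℝ)) := by
    rw [hs]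
    have h5p : (0:ℝ) < Real.sqrt 5^(m'+1) := by positivity
    have h5' := h5.ne'
    field_simp
    rw [one_div, inv_pow, mul_sub, mul_comm (q:ℝ), ← mul_assoc, mul_inv_cancel₀ h5p.ne', one_mul, mul_comm]
  rw [hval]
  apply hmain.congr'
  filter_upwards [eventually_ge_atTop q] with N hN
  exact (hsum N hN).symm
end

section
/- Let m, n, q be positive integers such that mnq is even. Then the series Σ_{k=1}^{∞} F_{nk+mnq} / ( Π_{j=0}^{2m} L_{nk+jnq} ) converges, and its sum equals (1 / (5 F_{mnq})) · Σ_{k=1}^{q} 1 / ( Π_{j=0}^{2m−1} L_{nk+jnq} ). -/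
open Filter Topology

lemma lucas_pos_s14 (j : ℕ) : 0 < lucas j := by
  induction j using Nat.twoStepInduction with
  | zero => decide
  | one => decide
  | more j h1 h2 => simp [lucas]; omega

lemma le_lucas (j : ℕ) : j ≤ lucas j := by
  induction j using Nat.twoStepInduction with
  | zero => decide
  | one => decide
  | more j h1 h2 => have := lucas_pos_s14 j; simp [lucas]; omega

lemma lucas_int (n : ℕ) : (lucas n : ℤ) = 2 * Nat.fib (n+1) - Nat.fib n := by
  induction n using Nat.twoStepInduction with
  | zero => decide
  | one => decide
  | more n h1 h2 =>
    have : lucas (n+2) = lucas (n+1) + lucas n := rfl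
    rw [this]
    push_cast [Nat.fib_add_two]
    have h3 : (Nat.fib (n+1+1) : ℤ) = Nat.fib n + Nat.fib (n+1) := by push_cast [Nat.fib_add_two]; ring
    linarith [h1, h2, h3]

lemma lucas_add_two (n : ℕ) : lucas (n+2) = lucas (n+1) + lucas n := rfl

-- C: F_{x+b+1} L_b − F_{x+b} L_{b+1} = (−1)^b L_x
lemma lemC (x b : ℕ) :
    (Nat.fib (x+b+1) : ℤ) * lucas b - Nat.fib (x+b) * lucas (b+1) = (-1)^b * lucas x := by
  induction b with
  | zero =>
    simp only [Nat.add_zero, pow_zero, one_mul, lucas_int]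
    norm_num [lucas]
    ring
  | succ b ih =>
    have e1 : (Nat.fib (x+(b+1)+1) : ℤ) = Nat.fib (x+b) + Nat.fib (x+b+1) := by
      have : x+(b+1)+1 = (x+b)+2 := by ring
      rw [this, Nat.fib_add_two]; push_cast; ring
    have e2 : (lucas (b+2) : ℤ) = lucas (b+1) + lucas b := by
      rw [lucas_add_two]; push_cast; ring
    have e3 : x+(b+1) = (x+b)+1 := by ring
    rw [e1, e3, e2]
    push_cast
    ring_nf
    ring_nf at ih
    linarith [ih]

-- 5 F_b = L_{b+1} + L_{b-1}, stated as: L_{b+2} + L_b = 5 F_{b+1}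
lemma lemE (b : ℕ) : (lucas (b+2) : ℤ) + lucas b = 5 * Nat.fib (b+1) := by
  rw [lucas_add_two]
  push_cast
  rw [lucas_int, lucas_int]
  have h1 : (Nat.fib (b+1+1) : ℤ) = Nat.fib b + Nat.fib (b+1) := by push_cast [Nat.fib_add_two]; ring
  have h2 : (Nat.fib (b+2) : ℤ) = Nat.fib b + Nat.fib (b+1) := by push_cast [Nat.fib_add_two]; ring
  linarith

-- D: L_{x+2b} = 5 F_b F_{x+b} + (−1)^b L_x
lemma lemD (x b : ℕ) :
    (lucas (x + 2*b) : ℤ) = 5 * Nat.fib b * Nat.fib (x+b) + (-1)^b * lucas x := by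
  cases b with
  | zero => simp
  | succ b =>
    -- x + 2(b+1) = (x+b+1) + (b+1); use fib_add: fib (m+n+1) = fib m fib n + fib(m+1) fib(n+1)
    have hf1 : (Nat.fib (x + 2*(b+1)) : ℤ)
        = Nat.fib (x+b+1) * Nat.fib b + Nat.fib (x+b+2) * Nat.fib (b+1) := by
      have h : x + 2*(b+1) = (x+b+1) + b + 1 := by ring
      rw [h, Nat.fib_add]; push_cast; ring
    have hf2 : (Nat.fib (x + 2*(b+1) + 1) : ℤ)
        = Nat.fib (x+b+1) * Nat.fib (b+1) + Nat.fib (x+b+2) * Nat.fib (b+2) := by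
      have h : x + 2*(b+1) + 1 = (x+b+1) + (b+1) + 1 := by ring
      rw [h, Nat.fib_add]; push_cast; ring
    have hC := lemC x (b+1)
    have hE := lemE b
    have hL : (lucas (x + 2*(b+1)) : ℤ) = 2 * Nat.fib (x + 2*(b+1) + 1) - Nat.fib (x + 2*(b+1)) :=
      lucas_int _
    rw [hL, hf1, hf2]
    -- 2(F_{a}F_{b+1}+F_{a+1}F_{b+2}) − (F_a F_b + F_{a+1}F_{b+1}) where a = x+b+1
    -- = F_a (2F_{b+1} − F_b) + F_{a+1}(2F_{b+2} − F_{b+1}) = F_a L_b + F_{a+1} L_{b+1}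
    have l1 : (2 * Nat.fib (b+1) - Nat.fib b : ℤ) = lucas b := (lucas_int b).symm
    have l2 : (2 * Nat.fib (b+2) - Nat.fib (b+1) : ℤ) = lucas (b+1) := (lucas_int (b+1)).symm
    have key : (Nat.fib (x+b+1) : ℤ) * lucas b + Nat.fib (x+b+2) * lucas (b+1)
        = 5 * Nat.fib (b+1) * Nat.fib (x+(b+1)) + (-1)^(b+1) * lucas x := by
      have hC' : (Nat.fib (x+b+2) : ℤ) * lucas (b+1) - Nat.fib (x+b+1) * lucas (b+2)
          = (-1)^(b+1) * lucas x := by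
        have : x+(b+1)+1 = x+b+2 := by ring
        rw [this] at hC
        have : x+(b+1) = x+b+1 := by ring
        rw [this] at hC
        linarith [hC]
      have hx : x + (b+1) = x+b+1 := by ring
      rw [hx]
      -- F_{x+b+1} L_b + F_{x+b+2} L_{b+1}
      --  = F_{x+b+1}(L_b + L_{b+2}) + (F_{x+b+2} L_{b+1} − F_{x+b+1} L_{b+2})
      nlinarith [hC', hE]
    linear_combination key + (Nat.fib (x+b+1) : ℤ) * l1 + (Nat.fib (x+b+2) : ℤ) * l2

/-- Theorem (`mnq` even):
`Σ_{k=1}^{∞} F_{nk+mnq} / (Π_{j=0}^{2m} L_{nk+jnq})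
  = (1/(5F_{mnq})) Σ_{k=1}^{q} 1/(Π_{j=0}^{2m−1} L_{nk+jnq})`. -/
theorem stmt_14 (m n q : ℕ) (hm : 0 < m) (hn : 0 < n) (hq : 0 < q)
    (heven : Even (m * n * q)) :
    Tendsto (fun N => ∑ k ∈ Finset.Icc 1 N,
        (Nat.fib (n * k + m * n * q) : ℝ) /
          ∏ j ∈ Finset.range (2 * m + 1), (lucas (n * k + j * n * q) : ℝ))
      atTop
      (𝓝 ((1 / (5 * (Nat.fib (m * n * q) : ℝ))) *
        ∑ k ∈ Finset.Icc 1 q,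
          (1 : ℝ) / ∏ j ∈ Finset.range (2 * m), (lucas (n * k + j * n * q) : ℝ))) := by
  have hfibpos : 0 < (Nat.fib (m * n * q) : ℝ) := by
    have : 0 < Nat.fib (m * n * q) := Nat.fib_pos.2 (by positivity)
    exact_mod_cast this
  set c : ℝ := 1 / (5 * (Nat.fib (m * n * q) : ℝ)) with hc
  have hcpos : 0 < c := by rw [hc]; positivity
  set g : ℕ → ℝ := fun k => (∏ j ∈ Finset.range (2 * m), (lucas (n * k + j * n * q) : ℝ))⁻¹
    with hg
  have hprodpos : ∀ (k : ℕ) (s : Finset ℕ), 0 < ∏ j ∈ s, (lucas (n * k + j * n * q) : ℝ) := by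
    intro k s
    apply Finset.prod_pos
    intro j _
    exact_mod_cast lucas_pos_s14 _
  -- term identity
  have hterm : ∀ k : ℕ,
      (Nat.fib (n * k + m * n * q) : ℝ) /
          ∏ j ∈ Finset.range (2 * m + 1), (lucas (n * k + j * n * q) : ℝ)
        = c * (g k - g (k + q)) := by
    intro k
    have hnum : (lucas (n * k + 2 * m * n * q) : ℝ)
        = 5 * Nat.fib (m * n * q) * Nat.fib (n * k + m * n * q) + lucas (n * k) := by
      have h := lemD (n * k) (m * n * q)
      rw [heven.neg_one_pow, one_mul] at h
      have e : n * k + 2 * (m * n * q) = n * k + 2 * m * n * q := by ring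
      rw [e] at h
      exact_mod_cast h
    have hP0 : (0:ℝ) < ∏ j ∈ Finset.range (2 * m), (lucas (n * k + j * n * q) : ℝ) :=
      hprodpos k _
    have hP1 : (0:ℝ) < ∏ j ∈ Finset.range (2 * m), (lucas (n * (k+q) + j * n * q) : ℝ) :=
      hprodpos (k+q) _
    have hsplit1 : ∏ j ∈ Finset.range (2 * m + 1), (lucas (n * k + j * n * q) : ℝ)
        = (∏ j ∈ Finset.range (2 * m), (lucas (n * k + j * n * q) : ℝ))
            * (lucas (n * k + 2 * m * n * q) : ℝ) := by
      rw [Finset.prod_range_succ]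
    have hsplit2 : ∏ j ∈ Finset.range (2 * m + 1), (lucas (n * k + j * n * q) : ℝ)
        = (lucas (n * k) : ℝ)
            * ∏ j ∈ Finset.range (2 * m), (lucas (n * (k+q) + j * n * q) : ℝ) := by
      rw [Finset.prod_range_succ', mul_comm]
      congr 1
      · norm_num
      · apply Finset.prod_congr rfl
        intro j _
        congr 2
        ring
    have hLpos : (0:ℝ) < lucas (n * k) := by exact_mod_cast lucas_pos_s14 _
    have hL2pos : (0:ℝ) < lucas (n * k + 2 * m * n * q) := by exact_mod_cast lucas_pos_s14 _
    have hgk : g k = (lucas (n * k + 2 * m * n * q) : ℝ)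
        / ∏ j ∈ Finset.range (2 * m + 1), (lucas (n * k + j * n * q) : ℝ) := by
      rw [hsplit1]
      simp only [hg]
      rw [eq_div_iff (by positivity)]
      field_simp
    have hgkq : g (k + q) = (lucas (n * k) : ℝ)
        / ∏ j ∈ Finset.range (2 * m + 1), (lucas (n * k + j * n * q) : ℝ) := by
      rw [hsplit2]
      simp only [hg]
      rw [eq_div_iff (by positivity)]
      field_simp
    rw [hgk, hgkq, div_sub_div_same, hnum]
    have e2 : (5 * (Nat.fib (m*n*q):ℝ) * (Nat.fib (n*k + m*n*q):ℝ) + (lucas (n*k):ℝ))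
        - (lucas (n*k):ℝ) = 5 * (Nat.fib (m*n*q):ℝ) * (Nat.fib (n*k + m*n*q):ℝ) := by ring
    rw [e2, hc]
    have hfull : (0:ℝ) < ∏ j ∈ Finset.range (2 * m + 1), (lucas (n * k + j * n * q) : ℝ) :=
      hprodpos k _
    rw [one_div, mul_div_assoc, ← mul_assoc,
      inv_mul_cancel₀ (by positivity : (5:ℝ) * (Nat.fib (m*n*q):ℝ) ≠ 0), one_mul]
  -- telescoping
  have htel : ∀ N : ℕ, ∑ k ∈ Finset.Icc 1 N, (g k - g (k + q))
      = (∑ k ∈ Finset.Icc 1 q, g k) - ∑ i ∈ Finset.Icc 1 q, g (N + i) := by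
    intro N
    have h1 : ∀ M : ℕ, Finset.Icc 1 M = Finset.Ioc 0 M := fun M => Finset.Icc_add_one_left_eq_Ioc 0 M
    simp only [h1]
    have hshift : ∑ k ∈ Finset.Ioc q (N + q), g k = ∑ k ∈ Finset.Ioc 0 N, g (k + q) := by
      rw [show Finset.Ioc q (N + q) = (Finset.Ioc 0 N).map (addRightEmbedding q) by
        rw [Finset.map_add_right_Ioc]; norm_num]
      rw [Finset.sum_map]
      rfl
    have hshift2 : ∑ k ∈ Finset.Ioc N (N + q), g k = ∑ i ∈ Finset.Ioc 0 q, g (N + i) := by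
      rw [show Finset.Ioc N (N + q) = (Finset.Ioc 0 q).map (addRightEmbedding N) by
        rw [Finset.map_add_right_Ioc]; norm_num [add_comm]]
      rw [Finset.sum_map]
      simp [addRightEmbedding, add_comm]
    have c1 : (∑ k ∈ Finset.Ioc 0 q, g k) + ∑ k ∈ Finset.Ioc q (N + q), g k
        = ∑ k ∈ Finset.Ioc 0 (N + q), g k :=
      Finset.sum_Ioc_consecutive _ (Nat.zero_le q) (Nat.le_add_left q N)
    have c2 : (∑ k ∈ Finset.Ioc 0 N, g k) + ∑ k ∈ Finset.Ioc N (N + q), g k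
        = ∑ k ∈ Finset.Ioc 0 (N + q), g k :=
      Finset.sum_Ioc_consecutive _ (Nat.zero_le N) (Nat.le_add_right N q)
    rw [Finset.sum_sub_distrib]
    rw [← hshift, ← hshift2] at *
    linarith
  -- limit of the tail
  have hg0 : Tendsto g atTop (𝓝 0) := by
    have hub : ∀ᶠ k in atTop, g k ≤ ((k : ℝ))⁻¹ := by
      filter_upwards [eventually_ge_atTop 1] with k hk
      have h1 : ((lucas (n * k + 0 * n * q) : ℕ) : ℝ)
          ≤ ∏ j ∈ Finset.range (2 * m), (lucas (n * k + j * n * q) : ℝ) := by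
        have hnat : lucas (n * k + 0 * n * q)
            ≤ ∏ j ∈ Finset.range (2 * m), lucas (n * k + j * n * q) :=
          Finset.single_le_prod' (f := fun j => lucas (n * k + j * n * q)) (fun j _ => lucas_pos_s14 _) (Finset.mem_range.2 (by omega : 0 < 2 * m))
        calc ((lucas (n * k + 0 * n * q) : ℕ) : ℝ)
            ≤ ((∏ j ∈ Finset.range (2 * m), lucas (n * k + j * n * q) : ℕ) : ℝ) := by
              exact_mod_cast hnat
          _ = ∏ j ∈ Finset.range (2 * m), (lucas (n * k + j * n * q) : ℝ) := by push_cast; rfl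
      have h2 : (k : ℝ) ≤ ((lucas (n * k + 0 * n * q) : ℕ) : ℝ) := by
        have hk1 : k ≤ n * k + 0 * n * q := by
          have : k ≤ n * k := Nat.le_mul_of_pos_left k hn
          omega
        exact_mod_cast le_trans hk1 (le_lucas _)
      have hkpos : (0:ℝ) < k := by exact_mod_cast hk
      calc g k ≤ (((lucas (n * k + 0 * n * q) : ℕ) : ℝ))⁻¹ := by
            apply inv_anti₀ _ h1
            exact_mod_cast lucas_pos_s14 _
        _ ≤ ((k:ℝ))⁻¹ := inv_anti₀ hkpos h2
    have hlb : ∀ᶠ k in atTop, 0 ≤ g k := by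
      filter_upwards with k
      exact le_of_lt (inv_pos.2 (hprodpos k _))
    have hinv : Tendsto (fun k : ℕ => ((k : ℝ))⁻¹) atTop (𝓝 0) :=
      tendsto_inv_atTop_zero.comp tendsto_natCast_atTop_atTop
    exact tendsto_of_tendsto_of_tendsto_of_le_of_le' tendsto_const_nhds hinv hlb hub
  have htail : Tendsto (fun N => ∑ i ∈ Finset.Icc 1 q, g (N + i)) atTop (𝓝 0) := by
    have h : Tendsto (fun N => ∑ i ∈ Finset.Icc 1 q, g (N + i)) atTop
        (𝓝 (∑ i ∈ Finset.Icc 1 q, (0:ℝ))) := by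
      apply tendsto_finset_sum
      intro i _
      exact hg0.comp (tendsto_add_atTop_nat i)
    simpa using h
  -- assemble
  have heq : ∀ N : ℕ, ∑ k ∈ Finset.Icc 1 N,
        (Nat.fib (n * k + m * n * q) : ℝ) /
          ∏ j ∈ Finset.range (2 * m + 1), (lucas (n * k + j * n * q) : ℝ)
      = c * ((∑ k ∈ Finset.Icc 1 q, g k) - ∑ i ∈ Finset.Icc 1 q, g (N + i)) := by
    intro N
    rw [← htel N, Finset.mul_sum]
    exact Finset.sum_congr rfl fun k _ => hterm k
  have hfinal : Tendsto (fun N => c * ((∑ k ∈ Finset.Icc 1 q, g k)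
      - ∑ i ∈ Finset.Icc 1 q, g (N + i))) atTop
      (𝓝 (c * ((∑ k ∈ Finset.Icc 1 q, g k) - 0))) :=
    (tendsto_const_nhds.sub htail).const_mul c
  have hgoal : c * ((∑ k ∈ Finset.Icc 1 q, g k) - 0)
      = c * ∑ k ∈ Finset.Icc 1 q,
          (1 : ℝ) / ∏ j ∈ Finset.range (2 * m), (lucas (n * k + j * n * q) : ℝ) := by
    rw [sub_zero]
    congr 1
    exact Finset.sum_congr rfl fun k _ => by rw [hg, one_div]
  rw [← hgoal]
  exact Tendsto.congr (fun N => (heq N).symm) hfinal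
end
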